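/- arXiv:2408.11656 — 3 statements merged into one kernel-verified Lean document; each statement's English description precedes it below -/
import Mathlib

section
/- Let N be an ℕ-valued random variable with P[N = n] = 2^{−(n+1)} for all n ∈ ℕ, let (a_n)_{n∈ℕ} be a sequence of nonnegative reals, and let z ∈ ℝ satisfy ∑_{n=0}^∞ a_n |z|^n < ∞. Then the random variable a_N · 2^{N+1} · z^N is integrable and E[a_N · 2^{N+1} · z^N] = ∑_{n=0}^∞ a_n z^n. -/
open MeasureTheory ProbabilityTheory

/-- Let `N` be an `ℕ`-valued random variable with `P[N = n] = 2^{-(n+1)}`, let `(a n)` be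
nonnegative reals and `z : ℝ` with `∑ n, a n * |z|^n < ∞`. Then `a N * 2^(N+1) * z^N` is
integrable and its expectation is `∑ n, a n * z^n`. -/
theorem geometric_reweighted_unbiased
    {Ω : Type*} [MeasurableSpace Ω] (μ : Measure Ω) [IsProbabilityMeasure μ]
    (N : Ω → ℕ) (hN : Measurable N)
    (hNdist : ∀ n : ℕ, μ (N ⁻¹' {n}) = (2 : ENNReal)⁻¹ ^ (n + 1))
    (a : ℕ → ℝ) (ha : ∀ n, 0 ≤ a n) (z : ℝ)
    (hsum : Summable (fun n => a n * |z| ^ n)) :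
    Integrable (fun ω => a (N ω) * 2 ^ (N ω + 1) * z ^ (N ω)) μ ∧
      ∫ ω, a (N ω) * 2 ^ (N ω + 1) * z ^ (N ω) ∂μ = ∑' n : ℕ, a n * z ^ n := by
  set g : ℕ → ℝ := fun n => a n * 2 ^ (n + 1) * z ^ n with hg
  have hgmeas : Measurable g := measurable_from_nat
  have hνs : ∀ n : ℕ, (μ.map N) {n} = (2 : ENNReal)⁻¹ ^ (n + 1) := by
    intro n
    rw [Measure.map_apply hN (measurableSet_singleton n)]
    exact hNdist n
  -- integrability of g with respect to the map measure
  have hint : Integrable g (μ.map N) := by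
    refine ⟨hgmeas.aestronglyMeasurable, ?_⟩
    rw [HasFiniteIntegral, lintegral_countable' (fun n => ‖g n‖ₑ)]
    have hval : ∀ n : ℕ, ‖g n‖ₑ * (μ.map N) {n}
        = ENNReal.ofReal (a n * |z| ^ n) := by
      intro n
      rw [hνs n]
      have h1 : ‖g n‖ₑ = ENNReal.ofReal |g n| := by
        rw [← ofReal_norm_eq_enorm, Real.norm_eq_abs]
      have h2 : ((2 : ENNReal)⁻¹) ^ (n + 1) = ENNReal.ofReal ((2 : ℝ)⁻¹ ^ (n + 1)) := by
        rw [ENNReal.ofReal_pow (by norm_num)]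
        congr 1
        rw [ENNReal.ofReal_inv_of_pos (by norm_num)]
        norm_num
      rw [h1, h2, ← ENNReal.ofReal_mul (abs_nonneg _)]
      congr 1
      rw [hg]
      simp only [abs_mul, abs_pow, abs_of_nonneg (ha n), abs_of_nonneg (by norm_num : (0:ℝ) ≤ 2)]
      field_simp
      have h3 : (2:ℝ) ^ (n + 1) * (1 / 2) ^ (n + 1) = 1 := by rw [← mul_pow]; norm_num
      linear_combination (a n * |z| ^ n) * h3
    rw [tsum_congr hval]
    calc ∑' n, ENNReal.ofReal (a n * |z| ^ n)
        = ENNReal.ofReal (∑' n, a n * |z| ^ n) := by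
          rw [ENNReal.ofReal_tsum_of_nonneg (fun n => mul_nonneg (ha n) (pow_nonneg (abs_nonneg z) n)) hsum]
      _ < ⊤ := ENNReal.ofReal_lt_top
  have hintΩ : Integrable (fun ω => g (N ω)) μ :=
    (integrable_map_measure hgmeas.aestronglyMeasurable hN.aemeasurable).mp hint
  refine ⟨hintΩ, ?_⟩
  have : ∫ ω, g (N ω) ∂μ = ∫ n, g n ∂(μ.map N) :=
    (integral_map hN.aemeasurable hgmeas.aestronglyMeasurable).symm
  rw [this, integral_countable' hint]
  refine tsum_congr fun n => ?_
  rw [measureReal_def, hνs n, hg]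
  have h2 : (((2 : ENNReal)⁻¹) ^ (n + 1)).toReal = (2 : ℝ)⁻¹ ^ (n + 1) := by
    simp [ENNReal.toReal_pow]
  rw [h2]
  simp only [smul_eq_mul]
  field_simp
  have h3 : (2:ℝ) ^ (n + 1) * (1 / 2) ^ (n + 1) = 1 := by rw [← mul_pow]; norm_num
  linear_combination (a n * z ^ n) * h3
end

section
/- Let d be a positive integer, let (a_n)_{n∈ℕ} be nonnegative reals with ∑_{n=0}^∞ a_n < ∞, let N be an ℕ-valued random variable with P[N = n] = 2^{−(n+1)}, and let (ω_j)_{j≥1} be a sequence of i.i.d. random vectors uniform on {−1,1}^d, independent of N. Define the random Maclaurin feature φ(x) = √(a_N · 2^{N+1}) · ∏_{j=1}^N ⟨ω_j, x⟩ for x ∈ ℝ^d (with the same realization of N and ω_1,…,ω_N used for every input). Then for all x, y ∈ ℝ^d with ‖x‖₂ ≤ 1 and ‖y‖₂ ≤ 1, the product φ(x)·φ(y) is integrable and E[φ(x) · φ(y)] = ∑_{n=0}^∞ a_n ⟨x, y⟩^n. -/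
open MeasureTheory ProbabilityTheory

/-- The sign vector in `ℝ^d` associated to a Boolean vector. -/
noncomputable def signVec (d : ℕ) (b : Fin d → Bool) : EuclideanSpace ℝ (Fin d) :=
  WithLp.toLp 2 (fun i => if b i then (1 : ℝ) else -1)

/-- The uniform distribution on `{-1, 1}^d ⊆ ℝ^d` (a Rademacher random vector). -/
noncomputable def rademacherMeasure (d : ℕ) : Measure (EuclideanSpace ℝ (Fin d)) :=
  Measure.map (signVec d) (PMF.uniformOfFintype (Fin d → Bool)).toMeasure

lemma signVec_inner (d : ℕ) (b : Fin d → Bool) (x : EuclideanSpace ℝ (Fin d)) :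
    (inner ℝ (signVec d b) x : ℝ) = ∑ i, (if b i then (1:ℝ) else -1) * x i := by
  simp [PiLp.inner_apply, signVec, RCLike.inner_apply]

lemma sum_sign_mul (d : ℕ) (i k : Fin d) :
    ∑ b : Fin d → Bool, ((if b i then (1:ℝ) else -1) * (if b k then (1:ℝ) else -1))
      = if i = k then (2:ℝ)^d else 0 := by
  rcases eq_or_ne i k with rfl | hik
  · simp only [if_pos rfl]
    have : ∀ b : Fin d → Bool, ((if b i then (1:ℝ) else -1) * (if b i then (1:ℝ) else -1)) = 1 := by
      intro b; cases b i <;> norm_num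
    rw [Finset.sum_congr rfl fun b _ => this b]
    simp [Finset.card_univ, Fintype.card_fun]
  · rw [if_neg hik]
    apply Finset.sum_ninvolution (fun b => Function.update b i (!(b i)))
    · intro b
      rw [Function.update_self, Function.update_of_ne (Ne.symm hik)]
      cases b i <;> cases b k <;> norm_num
    · intro b h
      intro hc
      have := congrFun hc i
      rw [Function.update_self] at this
      cases hb : b i <;> rw [hb] at this <;> simp_all
    · intro b; exact Finset.mem_univ _
    · intro b
      funext j
      rcases eq_or_ne j i with rfl | hj
      · simp
      · simp [Function.update_of_ne hj]

lemma key_sum (d : ℕ) (x y : EuclideanSpace ℝ (Fin d)) :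
    ∑ b : Fin d → Bool, (inner ℝ (signVec d b) x : ℝ) * (inner ℝ (signVec d b) y : ℝ)
      = 2^d * (inner ℝ x y : ℝ) := by
  simp only [signVec_inner, Finset.sum_mul_sum]
  rw [Finset.sum_comm]
  have : ∀ i : Fin d, ∑ b : Fin d → Bool, ∑ k : Fin d,
      ((if b i then (1:ℝ) else -1) * x i) * ((if b k then (1:ℝ) else -1) * y k)
      = 2^d * (x i * y i) := by
    intro i
    rw [Finset.sum_comm]
    have : ∀ k : Fin d, ∑ b : Fin d → Bool,
        ((if b i then (1:ℝ) else -1) * x i) * ((if b k then (1:ℝ) else -1) * y k)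
        = (if i = k then (2:ℝ)^d else 0) * (x i * y k) := by
      intro k
      rw [← sum_sign_mul d i k, Finset.sum_mul]
      congr 1; funext b; ring
    rw [Finset.sum_congr rfl fun k _ => this k]
    simp [Finset.sum_ite_eq, mul_comm]
  rw [Finset.sum_congr rfl fun i _ => this i, ← Finset.mul_sum, PiLp.inner_apply]
  simp [RCLike.inner_apply, mul_comm]

lemma signVec_measurable (d : ℕ) : Measurable (signVec d) :=
  measurable_of_finite _

lemma rad_integral (d : ℕ) (x y : EuclideanSpace ℝ (Fin d)) :
    ∫ z, (inner ℝ z x : ℝ) * (inner ℝ z y : ℝ) ∂(rademacherMeasure d) = (inner ℝ x y : ℝ) := by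
  have hcont : Continuous fun z : EuclideanSpace ℝ (Fin d) => (inner ℝ z x : ℝ) * (inner ℝ z y : ℝ) :=
    ((continuous_id.inner continuous_const)).mul ((continuous_id.inner continuous_const))
  rw [rademacherMeasure, integral_map (signVec_measurable d).aemeasurable
    hcont.aestronglyMeasurable, PMF.integral_eq_sum]
  simp only [PMF.uniformOfFintype_apply, smul_eq_mul]
  rw [← Finset.mul_sum (f := fun b => (inner ℝ (signVec d b) x : ℝ) * (inner ℝ (signVec d b) y : ℝ)),
    key_sum]
  have hcard : (Fintype.card (Fin d → Bool) : ℝ) = 2 ^ d := by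
    simp [Fintype.card_fun]
  rw [ENNReal.toReal_inv, ENNReal.toReal_natCast, hcard]
  field_simp

lemma rad_sq_sum (d : ℕ) (x : EuclideanSpace ℝ (Fin d)) :
    ∑ b : Fin d → Bool, |(inner ℝ (signVec d b) x : ℝ)| ^ 2 = 2 ^ d * ‖x‖ ^ 2 := by
  have := key_sum d x x
  rw [real_inner_self_eq_norm_sq] at this
  rw [← this]
  congr 1; funext b; rw [sq_abs, sq]

lemma rad_abs_integral (d : ℕ) (x y : EuclideanSpace ℝ (Fin d)) :
    ∫ z, |(inner ℝ z x : ℝ) * (inner ℝ z y : ℝ)| ∂(rademacherMeasure d) ≤ ‖x‖ * ‖y‖ := by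
  have hcont : Continuous fun z : EuclideanSpace ℝ (Fin d) =>
      |(inner ℝ z x : ℝ) * (inner ℝ z y : ℝ)| :=
    (((continuous_id.inner continuous_const)).mul
      ((continuous_id.inner continuous_const))).abs
  rw [rademacherMeasure, integral_map (signVec_measurable d).aemeasurable
    hcont.aestronglyMeasurable, PMF.integral_eq_sum]
  simp only [PMF.uniformOfFintype_apply, smul_eq_mul]
  rw [← Finset.mul_sum]
  have hcard : ((Fintype.card (Fin d → Bool) : ENNReal)⁻¹).toReal = ((2:ℝ) ^ d)⁻¹ := by
    rw [ENNReal.toReal_inv, ENNReal.toReal_natCast]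
    simp [Fintype.card_fun]
  rw [hcard]
  have hCS : (∑ b : Fin d → Bool, |(inner ℝ (signVec d b) x : ℝ)| * |(inner ℝ (signVec d b) y : ℝ)|)^2
      ≤ (∑ b : Fin d → Bool, |(inner ℝ (signVec d b) x : ℝ)|^2) *
        (∑ b : Fin d → Bool, |(inner ℝ (signVec d b) y : ℝ)|^2) :=
    Finset.sum_mul_sq_le_sq_mul_sq _ _ _
  rw [rad_sq_sum, rad_sq_sum] at hCS
  have hsumle : (∑ b : Fin d → Bool, |(inner ℝ (signVec d b) x : ℝ)| * |(inner ℝ (signVec d b) y : ℝ)|)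
      ≤ 2 ^ d * (‖x‖ * ‖y‖) := by
    have h1 : (0:ℝ) ≤ ∑ b : Fin d → Bool, |(inner ℝ (signVec d b) x : ℝ)| * |(inner ℝ (signVec d b) y : ℝ)| :=
      Finset.sum_nonneg fun b _ => mul_nonneg (abs_nonneg _) (abs_nonneg _)
    have h2 : (0:ℝ) ≤ 2 ^ d * (‖x‖ * ‖y‖) := by positivity
    have h3 : (2 ^ d * (‖x‖ * ‖y‖))^2 = (2 ^ d * ‖x‖ ^ 2) * (2 ^ d * ‖y‖ ^ 2) := by ring
    nlinarith
  calc ((2:ℝ)^d)⁻¹ * ∑ b : Fin d → Bool, |(inner ℝ (signVec d b) x : ℝ) * (inner ℝ (signVec d b) y : ℝ)|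
      = ((2:ℝ)^d)⁻¹ * ∑ b : Fin d → Bool,
        |(inner ℝ (signVec d b) x : ℝ)| * |(inner ℝ (signVec d b) y : ℝ)| := by
        congr 1; exact Finset.sum_congr rfl fun b _ => abs_mul _ _
    _ ≤ ((2:ℝ)^d)⁻¹ * (2 ^ d * (‖x‖ * ‖y‖)) := by
        apply mul_le_mul_of_nonneg_left hsumle; positivity
    _ = ‖x‖ * ‖y‖ := by field_simp

/-- Single-feature unbiasedness of the Random Maclaurin Feature (with `p = 2`):
if `N` has `P[N = n] = 2^{-(n+1)}`, the `ω j` are i.i.d. Rademacher vectors independent of `N`,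
and `φ x = √(a_N 2^{N+1}) ∏_{j<N} ⟨ω j, x⟩`, then for `‖x‖₂ ≤ 1`, `‖y‖₂ ≤ 1`, `φ x * φ y` is
integrable with `E[φ(x) φ(y)] = ∑ n, a n ⟨x, y⟩^n`. -/
theorem rmf_single_feature_unbiased
    (d : ℕ) (hd : 0 < d)
    {Ω : Type*} [MeasurableSpace Ω] (μ : Measure Ω) [IsProbabilityMeasure μ]
    (a : ℕ → ℝ) (ha : ∀ n, 0 ≤ a n) (hsum : Summable a)
    (N : Ω → ℕ) (hN : Measurable N)
    (hNdist : ∀ n : ℕ, μ (N ⁻¹' {n}) = (2 : ENNReal)⁻¹ ^ (n + 1))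
    (ω : ℕ → Ω → EuclideanSpace ℝ (Fin d))
    (hωindep : iIndepFun ω μ)
    (hωdist : ∀ j, Measure.map (ω j) μ = rademacherMeasure d)
    (hNω : IndepFun N (fun s j => ω j s) μ)
    (φ : EuclideanSpace ℝ (Fin d) → Ω → ℝ)
    (hφ : ∀ x s, φ x s =
      Real.sqrt (a (N s) * 2 ^ (N s + 1)) * ∏ j ∈ Finset.range (N s), (inner ℝ (ω j s) x : ℝ))
    (x y : EuclideanSpace ℝ (Fin d)) (hx : ‖x‖ ≤ 1) (hy : ‖y‖ ≤ 1) :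
    Integrable (fun s => φ x s * φ y s) μ ∧
      ∫ s, φ x s * φ y s ∂μ = ∑' n : ℕ, a n * (inner ℝ x y : ℝ) ^ n := by
  classical
  -- ω j is AEMeasurable
  have hradprob : rademacherMeasure d Set.univ = 1 := by
    rw [rademacherMeasure, Measure.map_apply (signVec_measurable d) MeasurableSet.univ]
    simp
  have hωae : ∀ j, AEMeasurable (ω j) μ := by
    intro j
    by_contra h
    have h0 : Measure.map (ω j) μ = 0 := Measure.map_of_not_aemeasurable h
    rw [hωdist j, ] at h0
    rw [h0] at hradprob
    simp at hradprob
  -- measurable modifications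
  set ω' : ℕ → Ω → EuclideanSpace ℝ (Fin d) := fun j => (hωae j).mk (ω j) with hω'def
  have hω'meas : ∀ j, Measurable (ω' j) := fun j => (hωae j).measurable_mk
  have hω'ae : ∀ j, ω j =ᵐ[μ] ω' j := fun j => (hωae j).ae_eq_mk
  have haeall : ∀ᵐ s ∂μ, ∀ j, ω j s = ω' j s := ae_all_iff.mpr hω'ae
  have hω'dist : ∀ j, Measure.map (ω' j) μ = rademacherMeasure d := fun j => by
    rw [← Measure.map_congr (hω'ae j)]; exact hωdist j
  have hω'indep : iIndepFun ω' μ := by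
    rw [iIndepFun_iff_measure_inter_preimage_eq_mul] at hωindep ⊢
    intro S sets hsets
    have key : ∀ i, (ω' i ⁻¹' sets i : Set Ω) =ᵐ[μ] (ω i ⁻¹' sets i) := fun i =>
      Filter.eventuallyEq_set.mpr ((hω'ae i).mono fun s hs => by
        simp [Set.mem_preimage, hs])
    have hInter : ((⋂ i ∈ S, ω' i ⁻¹' sets i) : Set Ω) =ᵐ[μ] (⋂ i ∈ S, ω i ⁻¹' sets i) :=
      Filter.eventuallyEq_set.mpr (haeall.mono fun s hs => by
        simp only [Set.mem_iInter, Set.mem_preimage]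
        exact forall₂_congr fun i _ => by rw [hs i])
    rw [measure_congr hInter, hωindep S hsets]
    exact Finset.prod_congr rfl fun i _ => (measure_congr (key i)).symm
  have hNω' : IndepFun N (fun s j => ω' j s) μ :=
    hNω.congr (Filter.EventuallyEq.refl _ _) (haeall.mono fun s hs => funext hs)
  -- the basic factor
  set g0 : EuclideanSpace ℝ (Fin d) → ℝ := fun z => (inner ℝ z x : ℝ) * (inner ℝ z y : ℝ)
    with hg0def
  have hg0 : Measurable g0 :=
    (((continuous_id.inner continuous_const)).mul
      ((continuous_id.inner continuous_const))).measurable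
  set h : ℕ → Ω → ℝ := fun j => g0 ∘ ω' j with hhdef
  have hhmeas : ∀ j, Measurable (h j) := fun j => hg0.comp (hω'meas j)
  have hhindep : iIndepFun h μ :=
    hω'indep.comp (fun _ => g0) (fun _ => hg0)
  have hg0int : Integrable g0 (rademacherMeasure d) := by
    rw [rademacherMeasure,
      integrable_map_measure hg0.aestronglyMeasurable (signVec_measurable d).aemeasurable]
    exact .of_finite
  have hmap : ∀ (j : ℕ) (u : EuclideanSpace ℝ (Fin d) → ℝ), Measurable u →
      Integrable (fun s => u (ω' j s)) μ ∧ ∫ s, u (ω' j s) ∂μ = ∫ z, u z ∂(rademacherMeasure d) :=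
    fun j u hu => by
      constructor
      · have := (integrable_map_measure hu.aestronglyMeasurable
          (hω'meas j).aemeasurable (f := ω' j) (μ := μ)).mp
        rw [hω'dist j] at this
        have h2 : Integrable u (rademacherMeasure d) := by
          rw [rademacherMeasure,
            integrable_map_measure hu.aestronglyMeasurable (signVec_measurable d).aemeasurable]
          exact .of_finite
        exact this h2
      · rw [← integral_map (hω'meas j).aemeasurable
          (by rw [hω'dist j]; exact hu.aestronglyMeasurable), hω'dist j]
  have hhint : ∀ j, Integrable (h j) μ := fun j => (hmap j g0 hg0).1
  have hhval : ∀ j, ∫ s, h j s ∂μ = (inner ℝ x y : ℝ) := fun j =>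
    ((hmap j g0 hg0).2).trans (rad_integral d x y)
  have hhaint : ∀ j, Integrable (fun s => |h j s|) μ := fun j => (hhint j).abs
  have hxy1 : ‖x‖ * ‖y‖ ≤ 1 := mul_le_one₀ hx (norm_nonneg y) hy
  have hhaval : ∀ j, ∫ s, |h j s| ∂μ ≤ 1 := fun j => by
    have h1 : ∫ s, |h j s| ∂μ = ∫ z, |g0 z| ∂(rademacherMeasure d) :=
      (hmap j (fun z => |g0 z|) hg0.abs).2
    rw [h1]
    exact le_trans (rad_abs_integral d x y) hxy1
  -- products
  have habsindep : iIndepFun (fun j => (fun t : ℝ => |t|) ∘ h j) μ :=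
    hhindep.comp (fun _ => fun t : ℝ => |t|) (fun _ => measurable_abs)
  have hprod : ∀ n : ℕ,
      Integrable (fun s => ∏ j ∈ Finset.range n, h j s) μ ∧
      (∫ s, ∏ j ∈ Finset.range n, h j s ∂μ = (inner ℝ x y : ℝ) ^ n) ∧
      Integrable (fun s => ∏ j ∈ Finset.range n, |h j s|) μ ∧
      (∫ s, ∏ j ∈ Finset.range n, |h j s| ∂μ ≤ 1) := by
    intro n
    induction n with
    | zero =>
      simp only [Finset.range_zero, Finset.prod_empty]
      exact ⟨integrable_const 1, by simp, integrable_const 1, by simp⟩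
    | succ n ih =>
      obtain ⟨ih1, ih2, ih3, ih4⟩ := ih
      have hind : IndepFun (∏ j ∈ Finset.range n, h j) (h n) μ :=
        hhindep.indepFun_prod_range_succ hhmeas n
      have hpe : (∏ j ∈ Finset.range n, h j) = fun s => ∏ j ∈ Finset.range n, h j s := by
        funext s; simp [Finset.prod_apply]
      have hinda : IndepFun (∏ j ∈ Finset.range n, (fun t : ℝ => |t|) ∘ h j)
          ((fun t : ℝ => |t|) ∘ h n) μ :=
        habsindep.indepFun_prod_range_succ (fun j => (hhmeas j).abs) n
      have hpea : (∏ j ∈ Finset.range n, (fun t : ℝ => |t|) ∘ h j)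
          = fun s => ∏ j ∈ Finset.range n, |h j s| := by
        funext s; simp [Finset.prod_apply]
      rw [hpe] at hind
      rw [hpea] at hinda
      have int1 : Integrable ((fun s => ∏ j ∈ Finset.range n, h j s) * h n) μ :=
        hind.integrable_mul ih1 (hhint n)
      have int2 : Integrable ((fun s => ∏ j ∈ Finset.range n, |h j s|) *
          fun s => |h n s|) μ := hinda.integrable_mul ih3 (hhaint n)
      have e1 : (fun s => ∏ j ∈ Finset.range (n+1), h j s)
          = (fun s => ∏ j ∈ Finset.range n, h j s) * h n := by
        funext s; simp [Finset.prod_range_succ]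
      have e2 : (fun s => ∏ j ∈ Finset.range (n+1), |h j s|)
          = (fun s => ∏ j ∈ Finset.range n, |h j s|) * fun s => |h n s| := by
        funext s; simp [Finset.prod_range_succ]
      refine ⟨by rw [e1]; exact int1, ?_, by rw [e2]; exact int2, ?_⟩
      · have hmul := hind.integral_mul_eq_mul_integral ih1.aestronglyMeasurable (hhint n).aestronglyMeasurable
        rw [e1]
        exact hmul.trans (by rw [ih2, hhval n, pow_succ])
      · have hmul := hinda.integral_mul_eq_mul_integral ih3.aestronglyMeasurable (hhaint n).aestronglyMeasurable
        rw [e2]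
        refine le_trans (le_of_eq hmul) ?_
        exact mul_le_one₀ ih4 (integral_nonneg fun s => abs_nonneg _) (hhaval n)

  -- indicator of {N = n} and the terms of the series
  set In : ℕ → Ω → ℝ := fun n s => if N s = n then 1 else 0 with hIndef
  set G : ℕ → Ω → ℝ :=
    fun n s => (a n * 2^(n+1)) * (In n s * ∏ j ∈ Finset.range n, h j s) with hGdef
  have hFmeas : ∀ n, Measurable (fun s => ∏ j ∈ Finset.range n, h j s) := fun n =>
    Finset.measurable_prod _ (fun j _ => hhmeas j)
  have hInmeas : ∀ n, Measurable (In n) := fun n =>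
    (measurable_of_countable (fun m : ℕ => if m = n then (1:ℝ) else 0)).comp hN
  have hGmeas : ∀ n, Measurable (G n) := fun n =>
    ((hInmeas n).mul (hFmeas n)).const_mul _
  have hIneq : ∀ n, In n = Set.indicator (N ⁻¹' {n}) (fun _ => (1:ℝ)) := fun n =>
    funext fun s => by
      by_cases hs : N s = n <;>
        simp [hIndef, Set.indicator_apply, Set.mem_preimage, hs]
  have hInint : ∀ n, Integrable (In n) μ := fun n => by
    rw [hIneq n]
    exact (integrable_const (1:ℝ)).indicator (hN (measurableSet_singleton n))
  have hInval : ∀ n, ∫ s, In n s ∂μ = ((2:ℝ)⁻¹)^(n+1) := fun n => by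
    have : ∫ s, In n s ∂μ = ∫ s, Set.indicator (N ⁻¹' {n}) (fun _ => (1:ℝ)) s ∂μ := by
      rw [hIneq n]
    rw [this, integral_indicator_const (1:ℝ) (hN (measurableSet_singleton n)), measureReal_def, hNdist n]
    simp [ENNReal.toReal_pow, ENNReal.toReal_inv]
  -- independence of In n and the products
  have hindF : ∀ n, IndepFun (In n) (fun s => ∏ j ∈ Finset.range n, h j s) μ := fun n => by
    have := hNω'.comp (φ := fun m : ℕ => if m = n then (1:ℝ) else 0)
      (ψ := fun w : ℕ → EuclideanSpace ℝ (Fin d) => ∏ j ∈ Finset.range n, g0 (w j))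
      (measurable_of_countable _)
      (Finset.measurable_prod _ (fun j _ => hg0.comp (measurable_pi_apply j)))
    exact this
  have hindFa : ∀ n, IndepFun (In n) (fun s => ∏ j ∈ Finset.range n, |h j s|) μ := fun n => by
    have := hNω'.comp (φ := fun m : ℕ => if m = n then (1:ℝ) else 0)
      (ψ := fun w : ℕ → EuclideanSpace ℝ (Fin d) => ∏ j ∈ Finset.range n, |g0 (w j)|)
      (measurable_of_countable _)
      (Finset.measurable_prod _ (fun j _ => (hg0.comp (measurable_pi_apply j)).abs))
    exact this
  have h2pow : ∀ n : ℕ, (2:ℝ)^(n+1) * ((2:ℝ)⁻¹)^(n+1) = 1 := fun n => by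
    rw [← mul_pow]; norm_num
  have hGint : ∀ n, Integrable (G n) μ := fun n => by
    have : Integrable (In n * fun s => ∏ j ∈ Finset.range n, h j s) μ :=
      (hindF n).integrable_mul (hInint n) (hprod n).1
    exact (this.const_mul _)
  have hGval : ∀ n, ∫ s, G n s ∂μ = a n * (inner ℝ x y : ℝ)^n := fun n => by
    have hmul : ∫ s, (In n * fun s => ∏ j ∈ Finset.range n, h j s) s ∂μ
        = (∫ s, In n s ∂μ) * ∫ s, ∏ j ∈ Finset.range n, h j s ∂μ :=
      (hindF n).integral_mul_eq_mul_integral (hInint n).aestronglyMeasurable (hprod n).1.aestronglyMeasurable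
    have e : ∫ s, G n s ∂μ
        = (a n * 2^(n+1)) * ∫ s, (In n * fun s => ∏ j ∈ Finset.range n, h j s) s ∂μ := by
      rw [← integral_const_mul]
      exact integral_congr_ae (ae_of_all _ fun s => rfl)
    rw [e, hmul, hInval n, (hprod n).2.1]
    calc (a n * 2^(n+1)) * (((2:ℝ)⁻¹)^(n+1) * (inner ℝ x y : ℝ)^n)
        = a n * ((2:ℝ)^(n+1) * ((2:ℝ)⁻¹)^(n+1)) * (inner ℝ x y : ℝ)^n := by ring
      _ = a n * (inner ℝ x y : ℝ)^n := by rw [h2pow n]; ring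
  have hGabs : ∀ n, ∫ s, |G n s| ∂μ ≤ a n := fun n => by
    have hceq : ∀ s, |G n s| = (a n * 2^(n+1)) * (In n s * ∏ j ∈ Finset.range n, |h j s|) := by
      intro s
      have hInn : (0:ℝ) ≤ In n s := by
        rw [hIndef]; dsimp only; split <;> norm_num
      have hcn : (0:ℝ) ≤ a n * 2^(n+1) := by
        have := ha n; positivity
      rw [hGdef]; dsimp only
      rw [abs_mul, abs_of_nonneg hcn, abs_mul, abs_of_nonneg hInn, Finset.abs_prod]
    have hmul : ∫ s, (In n * fun s => ∏ j ∈ Finset.range n, |h j s|) s ∂μ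
        = (∫ s, In n s ∂μ) * ∫ s, ∏ j ∈ Finset.range n, |h j s| ∂μ :=
      (hindFa n).integral_mul_eq_mul_integral (hInint n).aestronglyMeasurable (hprod n).2.2.1.aestronglyMeasurable
    have e : ∫ s, |G n s| ∂μ
        = (a n * 2^(n+1)) * ∫ s, (In n * fun s => ∏ j ∈ Finset.range n, |h j s|) s ∂μ := by
      rw [← integral_const_mul]
      exact integral_congr_ae (ae_of_all _ fun s => hceq s)
    rw [e, hmul, hInval n]
    have hcn : (0:ℝ) ≤ a n * 2^(n+1) := by have := ha n; positivity
    have hle : ((2:ℝ)⁻¹)^(n+1) * ∫ s, ∏ j ∈ Finset.range n, |h j s| ∂μ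
        ≤ ((2:ℝ)⁻¹)^(n+1) * 1 := by
      apply mul_le_mul_of_nonneg_left (hprod n).2.2.2 (by positivity)
    calc (a n * 2^(n+1)) * (((2:ℝ)⁻¹)^(n+1) * ∫ s, ∏ j ∈ Finset.range n, |h j s| ∂μ)
        ≤ (a n * 2^(n+1)) * (((2:ℝ)⁻¹)^(n+1) * 1) := mul_le_mul_of_nonneg_left hle hcn
      _ = a n * ((2:ℝ)^(n+1) * ((2:ℝ)⁻¹)^(n+1)) := by ring
      _ = a n := by rw [h2pow n]; ring
  -- pointwise identities
  have hGn_zero : ∀ n s, N s ≠ n → G n s = 0 := fun n s hns => by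
    rw [hGdef]; dsimp only
    rw [hIndef]; dsimp only
    rw [if_neg hns]; ring
  have htsum : ∀ s : Ω, ∑' n, G n s = G (N s) s := fun s =>
    tsum_eq_single (N s) (fun m hm => hGn_zero m s (Ne.symm hm))
  have hfae : (fun s => φ x s * φ y s) =ᵐ[μ] fun s => G (N s) s := by
    filter_upwards [haeall] with s hs
    rw [hφ x s, hφ y s]
    have hnn : (0:ℝ) ≤ a (N s) * 2 ^ (N s + 1) := by
      have := ha (N s); positivity
    have hsq : Real.sqrt (a (N s) * 2 ^ (N s+1)) * Real.sqrt (a (N s) * 2 ^ (N s+1))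
        = a (N s) * 2 ^ (N s + 1) := Real.mul_self_sqrt hnn
    have hprodeq : ∏ j ∈ Finset.range (N s), ((inner ℝ (ω j s) x : ℝ) * (inner ℝ (ω j s) y : ℝ))
        = ∏ j ∈ Finset.range (N s), h j s :=
      Finset.prod_congr rfl fun j _ => by rw [hs j]; rfl
    calc (Real.sqrt (a (N s) * 2 ^ (N s+1)) * ∏ j ∈ Finset.range (N s), (inner ℝ (ω j s) x : ℝ))
          * (Real.sqrt (a (N s) * 2 ^ (N s+1)) * ∏ j ∈ Finset.range (N s), (inner ℝ (ω j s) y : ℝ))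
        = (Real.sqrt (a (N s) * 2 ^ (N s+1)) * Real.sqrt (a (N s) * 2 ^ (N s+1)))
          * ((∏ j ∈ Finset.range (N s), (inner ℝ (ω j s) x : ℝ))
            * ∏ j ∈ Finset.range (N s), (inner ℝ (ω j s) y : ℝ)) := by ring
      _ = (a (N s) * 2 ^ (N s + 1))
          * ∏ j ∈ Finset.range (N s), ((inner ℝ (ω j s) x : ℝ) * (inner ℝ (ω j s) y : ℝ)) := by
            rw [hsq, ← Finset.prod_mul_distrib]
      _ = (a (N s) * 2 ^ (N s + 1)) * ∏ j ∈ Finset.range (N s), h j s := by rw [hprodeq]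
      _ = G (N s) s := by
            rw [hGdef]; dsimp only
            rw [hIndef]; dsimp only
            rw [if_pos rfl, one_mul]
  -- measurability and integrability of the diagonal function
  have hTmeas : Measurable (fun s => G (N s) s) := by
    have h1 : Measurable (fun p : Ω × ℕ => G p.2 p.1) :=
      measurable_from_prod_countable_left fun n => hGmeas n
    exact h1.comp (measurable_id.prodMk hN)
  have hnormt : ∀ s : Ω, (‖G (N s) s‖₊ : ENNReal) = ∑' n, (‖G n s‖₊ : ENNReal) := fun s =>
    (tsum_eq_single (f := fun n => (‖G n s‖₊ : ENNReal)) (N s)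
      fun m hm => by rw [hGn_zero m s (Ne.symm hm)]; simp).symm
  have hGlint : ∀ n, ∫⁻ s, (‖G n s‖₊ : ENNReal) ∂μ ≤ ENNReal.ofReal (a n) := fun n => by
    rw [show (∫⁻ s, (‖G n s‖₊ : ENNReal) ∂μ) = ∫⁻ s, ‖G n s‖ₑ ∂μ from rfl,
      ← ofReal_integral_norm_eq_lintegral_enorm (hGint n)]
    exact ENNReal.ofReal_le_ofReal (by simpa [Real.norm_eq_abs] using hGabs n)
  have hsum_lt : ∑' n, ∫⁻ s, (‖G n s‖₊ : ENNReal) ∂μ ≠ ⊤ := by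
    apply ne_top_of_le_ne_top ?_ (ENNReal.tsum_le_tsum hGlint)
    rw [← ENNReal.ofReal_tsum_of_nonneg ha hsum]
    exact ENNReal.ofReal_ne_top
  have hTint : Integrable (fun s => G (N s) s) μ := by
    refine ⟨hTmeas.aestronglyMeasurable, ?_⟩
    show (∫⁻ s, (‖G (N s) s‖₊ : ENNReal) ∂μ) < ⊤
    calc ∫⁻ s, (‖G (N s) s‖₊ : ENNReal) ∂μ
        = ∫⁻ s, ∑' n, (‖G n s‖₊ : ENNReal) ∂μ := lintegral_congr fun s => hnormt s
      _ = ∑' n, ∫⁻ s, (‖G n s‖₊ : ENNReal) ∂μ :=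
          lintegral_tsum fun n => ((hGmeas n).nnnorm.coe_nnreal_ennreal).aemeasurable
      _ < ⊤ := lt_top_iff_ne_top.mpr hsum_lt
  have hTval : ∫ s, G (N s) s ∂μ = ∑' n, a n * (inner ℝ x y : ℝ)^n := by
    have hts := integral_tsum (fun n => (hGmeas n).aestronglyMeasurable) hsum_lt
    calc ∫ s, G (N s) s ∂μ
        = ∫ s, ∑' n, G n s ∂μ := integral_congr_ae (ae_of_all _ fun s => (htsum s).symm)
      _ = ∑' n, ∫ s, G n s ∂μ := hts
      _ = ∑' n, a n * (inner ℝ x y : ℝ)^n := tsum_congr hGval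
  exact ⟨hTint.congr hfae.symm, (integral_congr_ae hfae).trans hTval⟩
end

section
/- Let n, d be positive integers, let q, μ ∈ ℝ^d, let k_1, …, k_n ∈ ℝ^d, let ν ∈ ℝ^d, and let r > 0. Define s, m ∈ ℝ^n by s_j = ⟨q, k_j⟩ / √d and m_j = ⟨μ, k_j⟩ / √d, and define u ∈ ℝ^n by u_j = ⟨q − μ, k_j − ν⟩ / (r √d). Then for every index j, softmax(u)_j = (softmax(s)_j)^{1/r} · (softmax(m)_j)^{−1/r} / ∑_{j'=1}^n (softmax(s)_{j'})^{1/r} · (softmax(m)_{j'})^{−1/r}. -/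
/-- The softmax function on `ℝ^n`: `softmax s i = exp (s i) / ∑ j, exp (s j)`. -/
noncomputable def softmax {n : ℕ} (s : Fin n → ℝ) (i : Fin n) : ℝ :=
  Real.exp (s i) / ∑ j, Real.exp (s j)

lemma softmax_shift {n : ℕ} (f : Fin n → ℝ) (c : ℝ) (i : Fin n) :
    softmax (fun j => f j + c) i = softmax f i := by
  simp only [softmax, Real.exp_add, ← Finset.sum_mul]
  rw [mul_div_mul_right _ _ (Real.exp_pos c).ne']

/-- Attention-weight form of Theorem 3 of the paper: the softmax attention weights computed
from batch-normalized inputs (query centered by `μ`, keys centered by `ν`, scores rescaled by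
`r`) equal the normalized ratio of the `(1/r)`-th powers of the original attention weights
`softmax s` and the mean-query attention weights `softmax m`. -/
theorem softmax_ppSBN_identity
    (n d : ℕ) (hn : 0 < n) (hd : 0 < d)
    (q μ ν : EuclideanSpace ℝ (Fin d)) (k : Fin n → EuclideanSpace ℝ (Fin d))
    (r : ℝ) (hr : 0 < r)
    (s m u : Fin n → ℝ)
    (hs : ∀ j, s j = (inner ℝ q (k j) : ℝ) / Real.sqrt d)
    (hm : ∀ j, m j = (inner ℝ μ (k j) : ℝ) / Real.sqrt d)
    (hu : ∀ j, u j = (inner ℝ (q - μ) (k j - ν) : ℝ) / (r * Real.sqrt d)) :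
    ∀ j, softmax u j
      = softmax s j ^ (1 / r) * softmax m j ^ (-(1 / r)) /
          ∑ j', softmax s j' ^ (1 / r) * softmax m j' ^ (-(1 / r)) := by
  intro j
  have hdpos : (0:ℝ) < Real.sqrt d := Real.sqrt_pos.mpr (by exact_mod_cast hd)
  set v : Fin n → ℝ := fun j => (s j - m j) / r with hv
  set c : ℝ := -((inner ℝ (q - μ) ν : ℝ)) / (r * Real.sqrt d) with hc
  -- u = v + c
  have huv : u = fun j => v j + c := by
    funext i
    simp only [hu i, hv, hc, hs, hm]
    have : (inner ℝ (q - μ) (k i - ν) : ℝ)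
        = (inner ℝ q (k i) : ℝ) - (inner ℝ μ (k i) : ℝ) - (inner ℝ (q - μ) ν : ℝ) := by
      rw [inner_sub_right, inner_sub_left]
    rw [this]
    field_simp
    ring
  -- exp rpow facts
  have A : ℝ := 0
  set As : ℝ := ∑ j', Real.exp (s j') with hAs
  set Bs : ℝ := ∑ j', Real.exp (m j') with hBs
  have hApos : 0 < As := Finset.sum_pos (fun i _ => Real.exp_pos _)
    (Finset.univ_nonempty_iff.mpr (Fin.pos_iff_nonempty.mp hn))
  have hBpos : 0 < Bs := Finset.sum_pos (fun i _ => Real.exp_pos _)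
    (Finset.univ_nonempty_iff.mpr (Fin.pos_iff_nonempty.mp hn))
  set C : ℝ := As ^ (-(1/r)) * Bs ^ (1/r) with hC
  have hCpos : 0 < C := mul_pos (Real.rpow_pos_of_pos hApos _) (Real.rpow_pos_of_pos hBpos _)
  have hexp_rpow : ∀ (a b : ℝ), (Real.exp a) ^ b = Real.exp (a * b) := by
    intro a b
    rw [Real.rpow_def_of_pos (Real.exp_pos a), Real.log_exp]
  have key : ∀ i, softmax s i ^ (1/r) * softmax m i ^ (-(1/r)) = Real.exp (v i) * C := by
    intro i
    simp only [softmax, ← hAs, ← hBs]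
    rw [Real.div_rpow (Real.exp_pos _).le hApos.le,
      Real.div_rpow (Real.exp_pos _).le hBpos.le,
      hexp_rpow, hexp_rpow, hC]
    simp only [hv]
    rw [Real.rpow_neg hApos.le,
      show m i * -(1/r) = -(m i * (1/r)) by ring, Real.exp_neg,
      show (s i - m i) / r = s i * (1/r) - m i * (1/r) by ring, Real.exp_sub]
    rw [Real.rpow_neg hBpos.le]
    field_simp
  simp only [key, ← Finset.sum_mul]
  rw [mul_div_mul_right _ _ hCpos.ne', huv]
  rw [softmax_shift]
  simp [softmax]
end
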